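/- Let p be an odd prime, γ a self-conjugate p-core, and let 0 ≤ i ≤ j ≤ p−1 with i < p−1. Then ∂⌈i,j⌋ = j − i − 1 + γ_{ij}; that is, for every sequence of two p-rim-hook removals starting at ⌈i,j⌋ and ending at γ, with leg lengths l_1 and l_2, one has |l_1 − l_2| = j − i − 1 + γ_{ij}, where γ_{ij} is the corresponding pyramid entry. -/
import Mathlib


namespace ArxivW2

/-- A partition of a natural number, given by its (weakly decreasing, finitely
supported) sequence of parts, `part i` being the `(i+1)`-st part. -/
structure PartitionNat : Type where
  part : ℕ → ℕ
  antitone : Antitone part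
  finite_support : (Function.support part).Finite

namespace PartitionNat

/-- The rank `|λ|` of a partition: the sum of its parts. -/
noncomputable def size (μ : PartitionNat) : ℕ := ∑ᶠ i, μ.part i

/-- The number of nonzero parts of a partition. -/
noncomputable def len (μ : PartitionNat) : ℕ := (Function.support μ.part).ncard

/-- The `(j+1)`-st part of the conjugate partition: `λ'_{j+1} = #{i : λ_i ≥ j+1}`. -/
noncomputable def conj (μ : PartitionNat) (j : ℕ) : ℕ := {i : ℕ | j + 1 ≤ μ.part i}.ncard

/-- A partition is self-conjugate if it equals its conjugate. -/
def SelfConj (μ : PartitionNat) : Prop := ∀ j, μ.part j = μ.conj j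

/-- `(i, j)` (0-indexed) is a node of the Young diagram of `μ`. -/
def IsNode (μ : PartitionNat) (i j : ℕ) : Prop := j < μ.part i

/-- The hook length of the (0-indexed) node `(i,j)`:
`h = λ_{i+1} + λ'_{j+1} − (i+1) − (j+1) + 1`. -/
noncomputable def hook (μ : PartitionNat) (i j : ℕ) : ℕ := μ.part i + μ.conj j - (i + j + 1)

/-- A partition is a `p`-core if no hook length of a node is divisible by `p`. -/
def IsCore (p : ℕ) (μ : PartitionNat) : Prop := ∀ i j, μ.IsNode i j → ¬ p ∣ μ.hook i j

/-- The `p`-weight of a partition: the number of nodes whose hook length is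
divisible by `p`. -/
noncomputable def pweight (p : ℕ) (μ : PartitionNat) : ℕ :=
  {x : ℕ × ℕ | μ.IsNode x.1 x.2 ∧ p ∣ μ.hook x.1 x.2}.ncard

/-- The `N`-bead beta-set `B_N(λ) = {λ_i + N − i : 1 ≤ i ≤ N}` of a partition
(meaningful when `N ≥ len λ`). -/
def betaSet (N : ℕ) (μ : PartitionNat) : Finset ℕ :=
  (Finset.range N).image fun i => μ.part i + (N - 1 - i)

/-- A partition is `p`-regular if no nonzero part is repeated `p` or more times. -/
def Regular (p : ℕ) (μ : PartitionNat) : Prop :=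
  ∀ i, μ.part i ≠ 0 → μ.part (i + p - 1) < μ.part i

end PartitionNat

open PartitionNat

/-- `γ` is the `p`-core of `lam`: `γ` is a `p`-core, and for some `N` at least the
number of parts of both, the `N`-bead beta-sets of `lam` and `γ` have the same number
of elements in each residue class mod `p`. -/
def HasCore (p : ℕ) (lam gam : PartitionNat) : Prop :=
  IsCore p gam ∧ ∃ N : ℕ, lam.len ≤ N ∧ gam.len ≤ N ∧ ∀ r : ℕ,
    ((betaSet N lam).filter fun b => b % p = r).card =
      ((betaSet N gam).filter fun b => b % p = r).card

/-- Membership in the `p`-block of weight `w` with `p`-core `gam`. -/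
def InBlock (p w : ℕ) (gam lam : PartitionNat) : Prop :=
  lam.size = gam.size + w * p ∧ HasCore p lam gam

/-- The dominance order: `lam ⊴ mu`. -/
def Dom (lam mu : PartitionNat) : Prop :=
  ∀ k : ℕ, ∑ i ∈ Finset.range k, lam.part i ≤ ∑ i ∈ Finset.range k, mu.part i

/-- `mu` is obtained from `lam` by removing a `p`-rim-hook of leg length `l`. -/
def RemoveHook (p : ℕ) (lam mu : PartitionNat) (l : ℕ) : Prop :=
  ∃ N b : ℕ, lam.len ≤ N ∧ mu.len ≤ N ∧ b ∈ betaSet N lam ∧ p ≤ b ∧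
    b - p ∉ betaSet N lam ∧
    betaSet N mu = insert (b - p) (betaSet N lam \ {b}) ∧
    l = ((betaSet N lam).filter fun x => b - p < x ∧ x < b).card

/-- `lam` belongs to the set `∂_l` of the weight-2 block of `gam`:
it lies in the block and some (equivalently, every) two-step `p`-rim-hook removal
sequence from `lam` down to `gam` has leg lengths `l₁, l₂` with `|l₁ − l₂| = l`. -/
def DelClass (p : ℕ) (gam : PartitionNat) (l : ℕ) (lam : PartitionNat) : Prop :=
  InBlock p 2 gam lam ∧ ∃ mu l1 l2, RemoveHook p lam mu l1 ∧ RemoveHook p mu gam l2 ∧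
    max l1 l2 - min l1 l2 = l

/-- `ρ 0 < ρ 1 < ⋯ < ρ (p−1)` is the increasing enumeration of the maxima of the
residue classes mod `p` in the `N`-bead beta-set of `gam`. -/
def IsRho (p N : ℕ) (gam : PartitionNat) (ρ : ℕ → ℕ) : Prop :=
  (∀ i j, i < j → j < p → ρ i < ρ j) ∧
  (∀ i, i < p → ρ i ∈ betaSet N gam ∧ ∀ b ∈ betaSet N gam, b % p = ρ i % p → b ≤ ρ i) ∧
  (∀ r, r < p → ∃ i, i < p ∧ ρ i % p = r)

/-- The beta-set of the partition `⟨i,j⟩` (`i < j`). -/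
def pairBeta (p : ℕ) (B : Finset ℕ) (ρ : ℕ → ℕ) (i j : ℕ) : Finset ℕ :=
  (B \ {ρ i, ρ j}) ∪ {ρ i + p, ρ j + p}

/-- The beta-set of the partition `⟨i⟩`. -/
def oneBeta (p : ℕ) (B : Finset ℕ) (ρ : ℕ → ℕ) (i : ℕ) : Finset ℕ :=
  (B \ {ρ i}) ∪ {ρ i + 2 * p}

/-- The beta-set of the partition `⟨i²⟩`. -/
def sqBeta (p : ℕ) (B : Finset ℕ) (ρ : ℕ → ℕ) (i : ℕ) : Finset ℕ :=
  (B \ {ρ i - p}) ∪ {ρ i + p}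

/-- The pyramid entry `γ_{ij}` of the block, extended by `1` for `i > j` and `0`
for `j ≥ p`. -/
def pyr (p : ℕ) (ρ : ℕ → ℕ) (i j : ℕ) : ℕ :=
  if j < i then 1 else if p ≤ j then 0 else if ρ j - ρ i < p then 1 else 0

/-- The beta-set of Fayers' partition `⌈i,j⌋` (for `0 ≤ i ≤ j ≤ p−1`, `i < p−1`),
defined by cases on the pyramid entries. -/
def fayersBeta (p : ℕ) (B : Finset ℕ) (ρ : ℕ → ℕ) (i j : ℕ) : Finset ℕ :=
  if i = j then
    (if pyr p ρ (i + 1) (i + 2) = 1 then pairBeta p B ρ (i + 1) (i + 2)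
     else oneBeta p B ρ (i + 1))
  else
    if pyr p ρ i (j + 1) = 1 then pairBeta p B ρ i (j + 1)
    else if pyr p ρ i j = 1 then oneBeta p B ρ i
    else if pyr p ρ (i + 1) j = 1 then sqBeta p B ρ j
    else pairBeta p B ρ (i + 1) j

/-- The set of `p`-BG-partitions in the block of weight `w` with core `gam`:
self-conjugate partitions in the block none of whose diagonal hook lengths is
divisible by `p`. -/
def BGset (p w : ℕ) (gam : PartitionNat) : Set PartitionNat :=
  {lam | InBlock p w gam lam ∧ SelfConj lam ∧ ∀ i, lam.IsNode i i → ¬ p ∣ lam.hook i i}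


section Infra

open PartitionNat Finset

lemma len_le_of_part_eq_zero {μ : PartitionNat} {n : ℕ} (h : μ.part n = 0) :
    μ.len ≤ n := by
  have hsub : Function.support μ.part ⊆ ↑(Finset.range n) := by
    intro k hk
    simp only [Finset.coe_range, Set.mem_Iio]
    by_contra hkn
    push_neg at hkn
    exact hk (Nat.le_antisymm (h ▸ μ.antitone hkn) (Nat.zero_le _))
  have h2 := Set.ncard_le_ncard hsub (Finset.range n).finite_toSet
  rw [Set.ncard_coe_finset, Finset.card_range] at h2
  exact h2

lemma part_eq_zero_of_len_le {μ : PartitionNat} {n : ℕ} (h : μ.len ≤ n) :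
    μ.part n = 0 := by
  by_contra hne
  have hsub : ↑(Finset.range (n + 1)) ⊆ Function.support μ.part := by
    intro k hk
    simp only [Finset.coe_range, Set.mem_Iio] at hk
    intro h0
    exact hne (Nat.le_antisymm (h0 ▸ μ.antitone (Nat.lt_succ_iff.mp hk)) (Nat.zero_le _))
  have := Set.ncard_le_ncard hsub μ.finite_support
  simp only [Set.ncard_coe_finset, Finset.card_range] at this
  have : n + 1 ≤ μ.len := this
  omega

lemma mem_betaSet {μ : PartitionNat} {N x : ℕ} :
    x ∈ betaSet N μ ↔ ∃ k, k < N ∧ μ.part k + (N - 1 - k) = x := by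
  simp [betaSet]

/-- The shift operation on beta-sets. -/
def shiftSet (S : Finset ℕ) : Finset ℕ := insert 0 (S.image (· + 1))

lemma mem_shiftSet {S : Finset ℕ} {x : ℕ} :
    x ∈ shiftSet S ↔ x = 0 ∨ ∃ y ∈ S, y + 1 = x := by
  simp [shiftSet]

lemma shiftSet_inj {S T : Finset ℕ} (h : shiftSet S = shiftSet T) : S = T := by
  ext x
  have hx := Finset.ext_iff.mp h (x + 1)
  simp only [mem_shiftSet] at hx
  constructor
  · intro hxS
    rcases hx.mp (Or.inr ⟨x, hxS, rfl⟩) with h0 | ⟨y, hy, hy1⟩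
    · omega
    · have : y = x := by omega
      exact this ▸ hy
  · intro hxT
    rcases hx.mpr (Or.inr ⟨x, hxT, rfl⟩) with h0 | ⟨y, hy, hy1⟩
    · omega
    · have : y = x := by omega
      exact this ▸ hy

lemma shiftSet_insert (a : ℕ) (S : Finset ℕ) :
    shiftSet (insert a S) = insert (a + 1) (shiftSet S) := by
  simp only [shiftSet, Finset.image_insert]
  exact Finset.insert_comm _ _ _

lemma shiftSet_sdiff (S : Finset ℕ) (a : ℕ) :
    shiftSet (S \ {a}) = shiftSet S \ {a + 1} := by
  simp only [shiftSet]
  rw [Finset.image_sdiff _ _ (fun x y h => by omega), Finset.image_singleton,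
    Finset.insert_sdiff_of_notMem _ (by simp)]

lemma betaSet_succ {μ : PartitionNat} {N : ℕ} (h : μ.len ≤ N) :
    betaSet (N + 1) μ = shiftSet (betaSet N μ) := by
  have hz := part_eq_zero_of_len_le h
  ext x
  simp only [mem_betaSet, mem_shiftSet]
  constructor
  · rintro ⟨k, hk, rfl⟩
    rcases Nat.lt_or_ge k N with h' | h'
    · exact Or.inr ⟨μ.part k + (N - 1 - k), ⟨k, h', rfl⟩, by omega⟩
    · have hkN : k = N := by omega
      subst hkN
      left; omega
  · rintro (rfl | ⟨y, ⟨k, hk, rfl⟩, rfl⟩)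
    · exact ⟨N, by omega, by omega⟩
    · exact ⟨k, by omega, by omega⟩

lemma len_le_of_zero_mem_betaSet {μ : PartitionNat} {N : ℕ}
    (h : (0 : ℕ) ∈ betaSet (N + 1) μ) : μ.len ≤ N := by
  rcases mem_betaSet.mp h with ⟨k, hk, hke⟩
  have h1 : μ.part k = 0 := by omega
  have h2 : k = N := by omega
  exact h2 ▸ len_le_of_part_eq_zero h1

lemma shift_filter_card (S : Finset ℕ) (u v : ℕ) :
    ((shiftSet S).filter fun x => u < x ∧ x < v).card
      = (S.filter fun x => u < x + 1 ∧ x + 1 < v).card := by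
  simp only [shiftSet]
  rw [Finset.filter_insert, if_neg (by omega), Finset.filter_image,
    Finset.card_image_of_injective _ (fun x y h => by omega)]

/-- Normalized removal relation at bead number `M`. -/
def Rel (p : ℕ) (lam mu : PartitionNat) (l M : ℕ) : Prop :=
  lam.len ≤ M ∧ mu.len ≤ M ∧ ∃ b, b ∈ betaSet M lam ∧ p ≤ b ∧ b - p ∉ betaSet M lam ∧
    betaSet M mu = insert (b - p) (betaSet M lam \ {b}) ∧
    l = ((betaSet M lam).filter fun x => b - p < x ∧ x < b).card

lemma rel_up {p : ℕ} (hp : 2 ≤ p) {lam mu : PartitionNat} {l M : ℕ}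
    (h : Rel p lam mu l M) : Rel p lam mu l (M + 1) := by
  obtain ⟨hl, hm, b, hb, hbp, hg, he, hc⟩ := h
  have hsl : betaSet (M + 1) lam = shiftSet (betaSet M lam) := betaSet_succ hl
  have hsm : betaSet (M + 1) mu = shiftSet (betaSet M mu) := betaSet_succ hm
  refine ⟨by omega, by omega, b + 1, ?_, by omega, ?_, ?_, ?_⟩
  · rw [hsl]; exact mem_shiftSet.mpr (Or.inr ⟨b, hb, rfl⟩)
  · rw [hsl]
    intro hmem
    rcases mem_shiftSet.mp hmem with h0 | ⟨y, hy, hy1⟩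
    · omega
    · have : y = b - p := by omega
      exact hg (this ▸ hy)
  · rw [hsm, he, hsl, shiftSet_insert, shiftSet_sdiff]
    have e1 : b + 1 - p = b - p + 1 := by omega
    rw [e1]
  · rw [hsl, shift_filter_card, hc]
    congr 1
    apply Finset.filter_congr
    intro x _
    constructor <;> intro <;> omega

lemma rel_down {p : ℕ} (hp : 2 ≤ p) {lam mu : PartitionNat} {l M : ℕ}
    (hl : lam.len ≤ M) (h : Rel p lam mu l (M + 1)) : Rel p lam mu l M := by
  obtain ⟨_, hm, b, hb, hbp, hg, he, hc⟩ := h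
  have hsl : betaSet (M + 1) lam = shiftSet (betaSet M lam) := betaSet_succ hl
  have h0lam : (0 : ℕ) ∈ betaSet (M + 1) lam := by
    rw [hsl]; exact mem_shiftSet.mpr (Or.inl rfl)
  have hbp1 : p + 1 ≤ b := by
    by_contra h'
    have hbe : b - p = 0 := by omega
    rw [hbe] at hg
    exact hg h0lam
  have hmlen : mu.len ≤ M := by
    apply len_le_of_zero_mem_betaSet
    rw [he]
    exact Finset.mem_insert.mpr (Or.inr (Finset.mem_sdiff.mpr
      ⟨h0lam, by simp; omega⟩))
  have hsm : betaSet (M + 1) mu = shiftSet (betaSet M mu) := betaSet_succ hmlen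
  have hbmem : b - 1 ∈ betaSet M lam := by
    rcases mem_shiftSet.mp (hsl ▸ hb) with h0 | ⟨y, hy, hy1⟩
    · omega
    · have : y = b - 1 := by omega
      exact this ▸ hy
  refine ⟨hl, hmlen, b - 1, hbmem, by omega, ?_, ?_, ?_⟩
  · intro hmem
    apply hg
    rw [hsl]
    exact mem_shiftSet.mpr (Or.inr ⟨b - 1 - p, hmem, by omega⟩)
  · apply shiftSet_inj
    have e1 : b - 1 + 1 = b := by omega
    have e2 : b - 1 - p + 1 = b - p := by omega
    rw [shiftSet_insert, shiftSet_sdiff, ← hsm, he, hsl, e1, e2]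
  · rw [hsl, shift_filter_card] at hc
    rw [hc]
    congr 1
    apply Finset.filter_congr
    intro x _
    constructor <;> intro <;> omega

lemma removeHook_norm {p : ℕ} (hp : 2 ≤ p) {lam mu : PartitionNat} {l : ℕ}
    (h : RemoveHook p lam mu l) {N : ℕ} (hN : lam.len ≤ N) :
    Rel p lam mu l N := by
  obtain ⟨N₀, b₀, hl0, hm0, hb0, hp0, hg0, he0, hc0⟩ := h
  have base : Rel p lam mu l N₀ := ⟨hl0, hm0, b₀, hb0, hp0, hg0, he0, hc0⟩
  have up : ∀ k, Rel p lam mu l (N₀ + k) := by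
    intro k
    induction k with
    | zero => exact base
    | succ n ih => exact rel_up hp ih
  rcases le_or_gt N₀ N with hle | hlt
  · have : N₀ + (N - N₀) = N := by omega
    exact this ▸ up (N - N₀)
  · have down : ∀ k, Rel p lam mu l (N + k) → Rel p lam mu l N := by
      intro k
      induction k with
      | zero => exact id
      | succ n ih =>
        intro hR
        have : N + (n + 1) = (N + n) + 1 := by omega
        exact ih (rel_down hp (by omega) (this ▸ hR))
    have hNN : N + (N₀ - N) = N₀ := by omega
    exact down (N₀ - N) (by rw [hNN]; exact base)

end Infra


section Core

open PartitionNat Finset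

lemma conj_set_finite (γ : PartitionNat) (j : ℕ) : {i : ℕ | j + 1 ≤ γ.part i}.Finite := by
  apply Set.Finite.subset γ.finite_support
  intro m hm
  simp only [Set.mem_setOf_eq] at hm
  simp only [Function.mem_support]
  omega

lemma conj_le_of_part_le {γ : PartitionNat} {j k : ℕ} (h : γ.part k ≤ j) : γ.conj j ≤ k := by
  have hsub : {i : ℕ | j + 1 ≤ γ.part i} ⊆ ↑(Finset.range k) := by
    intro m hm
    simp only [Set.mem_setOf_eq] at hm
    simp only [Finset.coe_range, Set.mem_Iio]
    by_contra hmk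
    push_neg at hmk
    have := γ.antitone hmk
    omega
  have h2 := Set.ncard_le_ncard hsub (Finset.range k).finite_toSet
  rwa [Set.ncard_coe_finset, Finset.card_range] at h2

lemma le_conj_of_part_ge {γ : PartitionNat} {j k : ℕ} (h : j + 1 ≤ γ.part k) :
    k + 1 ≤ γ.conj j := by
  have hsub : ↑(Finset.range (k + 1)) ⊆ {i : ℕ | j + 1 ≤ γ.part i} := by
    intro m hm
    simp only [Finset.coe_range, Set.mem_Iio] at hm
    simp only [Set.mem_setOf_eq]
    exact le_trans h (γ.antitone (by omega))
  have h2 := Set.ncard_le_ncard hsub (conj_set_finite γ j)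
  rwa [Set.ncard_coe_finset, Finset.card_range] at h2

lemma conj_le_len (γ : PartitionNat) (j : ℕ) : γ.conj j ≤ γ.len := by
  apply Set.ncard_le_ncard _ γ.finite_support
  intro m hm
  simp only [Set.mem_setOf_eq] at hm
  simp only [Function.mem_support]
  omega

lemma conj_antitone (γ : PartitionNat) : Antitone γ.conj := by
  intro a b hab
  apply Set.ncard_le_ncard _ (conj_set_finite γ a)
  intro m hm
  simp only [Set.mem_setOf_eq] at hm ⊢
  omega

lemma core_full {p : ℕ} (hp : 0 < p) {γ : PartitionNat} (hγ : IsCore p γ) {N : ℕ}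
    (hlen : γ.len ≤ N) : ∀ b ∈ betaSet N γ, p ≤ b → b - p ∈ betaSet N γ := by
  intro b hb hpb
  obtain ⟨i, hiN, hie⟩ := mem_betaSet.mp hb
  rcases Nat.eq_zero_or_pos (γ.part i) with hz | hpos
  · refine mem_betaSet.mpr ⟨i + p, by omega, ?_⟩
    have : γ.part (i + p) = 0 := Nat.le_antisymm (hz ▸ γ.antitone (by omega)) (Nat.zero_le _)
    omega
  by_contra hgap
  have factA : ∀ j k, γ.part k + γ.conj j ≠ k + j + 1 := by
    intro j k
    rcases le_or_gt (j + 1) (γ.part k) with hge | hlt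
    · have := le_conj_of_part_ge hge; omega
    · have := conj_le_of_part_le (γ := γ) (j := j) (k := k) (by omega); omega
  have hconjN : ∀ j, γ.conj j ≤ N := fun j => (conj_le_len γ j).trans hlen
  have hconji : ∀ j, j < γ.part i → i + 1 ≤ γ.conj j := fun j hj => le_conj_of_part_ge hj
  have hfnot : ∀ j, (N + j - γ.conj j) ∉ betaSet N γ := by
    intro j hmem
    obtain ⟨k, hkN, hke⟩ := mem_betaSet.mp hmem
    have h1 := factA j k
    have h2 := hconjN j
    omega
  have hbelow : (Finset.range b).filter (· ∈ betaSet N γ)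
      = (Finset.Ico (i + 1) N).image (fun k => γ.part k + (N - 1 - k)) := by
    ext x
    simp only [mem_filter, mem_range, mem_image, mem_Ico]
    constructor
    · rintro ⟨hxb, hxβ⟩
      obtain ⟨k, hkN, hke⟩ := mem_betaSet.mp hxβ
      refine ⟨k, ⟨?_, hkN⟩, hke⟩
      by_contra hki
      have hki' : k ≤ i := by omega
      have := γ.antitone hki'
      omega
    · rintro ⟨k, ⟨hik, hkN⟩, hke⟩
      have h1 := γ.antitone (le_of_lt hik)
      exact ⟨by omega, mem_betaSet.mpr ⟨k, hkN, hke⟩⟩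
  have hbelow_card : ((Finset.range b).filter (· ∈ betaSet N γ)).card = N - 1 - i := by
    rw [hbelow, Finset.card_image_of_injOn, Nat.card_Ico]
    · omega
    · intro x hx y hy hxy
      have hxy' : γ.part x + (N - 1 - x) = γ.part y + (N - 1 - y) := hxy
      simp only [coe_Ico, Set.mem_Ico] at hx hy
      by_contra hne
      rcases lt_or_gt_of_ne hne with h' | h'
      · have := γ.antitone (le_of_lt h'); omega
      · have := γ.antitone (le_of_lt h'); omega
  have hG : ((Finset.range b).filter (· ∉ betaSet N γ)).card = γ.part i := by
    have htot := Finset.card_filter_add_card_filter_not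
      (s := Finset.range b) (· ∈ betaSet N γ)
    rw [Finset.card_range, hbelow_card] at htot
    omega
  have himg : (Finset.range (γ.part i)).image (fun j => N + j - γ.conj j)
      ⊆ (Finset.range b).filter (· ∉ betaSet N γ) := by
    intro x hx
    simp only [mem_image, mem_range] at hx
    obtain ⟨j, hj, rfl⟩ := hx
    simp only [mem_filter, mem_range]
    refine ⟨?_, hfnot j⟩
    have h1 := hconji j hj
    have h2 := hconjN j
    omega
  have himgcard : ((Finset.range (γ.part i)).image fun j => N + j - γ.conj j).card
      = γ.part i := by
    rw [Finset.card_image_of_injOn, Finset.card_range]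
    intro x hx y hy hxy
    have hxy' : N + x - γ.conj x = N + y - γ.conj y := hxy
    simp only [coe_range, Set.mem_Iio] at hx hy
    by_contra hne
    rcases lt_or_gt_of_ne hne with h' | h'
    · have hca := conj_antitone γ (le_of_lt h')
      have := hconjN x; have := hconjN y; omega
    · have hca := conj_antitone γ (le_of_lt h')
      have := hconjN x; have := hconjN y; omega
  have heq := Finset.eq_of_subset_of_card_le himg (by rw [himgcard, hG])
  have hbpG : b - p ∈ (Finset.range b).filter (· ∉ betaSet N γ) := by
    simp only [mem_filter, mem_range]
    exact ⟨by omega, hgap⟩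
  rw [← heq] at hbpG
  obtain ⟨j, hj, hje⟩ := Finset.mem_image.mp hbpG
  simp only [mem_range] at hj
  have hc1 := hconji j hj
  have hc2 := hconjN j
  apply hγ i j hj
  have hhook : γ.hook i j = p := by
    unfold PartitionNat.hook
    omega
  rw [hhook]

end Core


section Count

open Finset

lemma count_interval {p : ℕ} {B : Finset ℕ} {ρ : ℕ → ℕ} (hp : 0 < p)
    (hfull : ∀ b ∈ B, p ≤ b → b - p ∈ B)
    (hmax : ∀ m, m < p → ρ m ∈ B ∧ ∀ x ∈ B, x % p = ρ m % p → x ≤ ρ m)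
    (hsur : ∀ r, r < p → ∃ k, k < p ∧ ρ k % p = r)
    (hresinj : ∀ k m, k < p → m < p → ρ k % p = ρ m % p → k = m)
    (a : ℕ) :
    (B.filter fun x => a < x ∧ x < a + p).card
      = ((Finset.range p).filter fun k => a < ρ k ∧ ρ k % p ≠ a % p).card := by
  have hfull' : ∀ {x k}, k < p → x % p = ρ k % p → x ≤ ρ k → x ∈ B := by
    intro x k hk hxr hle
    obtain ⟨c, hc⟩ := (Nat.modEq_iff_dvd' hle).mp hxr
    have aux : ∀ c b, b ∈ B → p * c ≤ b → b - p * c ∈ B := by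
      intro c
      induction c with
      | zero => intro b hb _; simpa using hb
      | succ n ih =>
        intro b hb hle2
        rw [Nat.mul_succ] at hle2 ⊢
        have h1 : b - p * n ∈ B := ih b hb (by omega)
        have h2 := hfull _ h1 (by omega)
        have he : b - p * n - p = b - (p * n + p) := by omega
        rwa [he] at h2
    have h3 := aux c (ρ k) (hmax k hk).1 (by omega)
    have h4 : ρ k - p * c = x := by omega
    rwa [h4] at h3
  have key : ∀ k, k < p → a < ρ k → (a + 1 + ((ρ k - (a + 1)) % p)) % p = ρ k % p := by
    intro k hk hka
    have h1 : a + 1 + (ρ k - (a + 1)) = ρ k := by omega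
    calc (a + 1 + ((ρ k - (a + 1)) % p)) % p
        = (a + 1 + (ρ k - (a + 1))) % p := Nat.ModEq.add_left _ (Nat.mod_modEq _ _)
      _ = ρ k % p := by rw [h1]
  symm
  apply Finset.card_bij (fun k _ => a + 1 + ((ρ k - (a + 1)) % p))
  · intro k hk0
    simp only [Finset.mem_filter, Finset.mem_range] at hk0
    obtain ⟨hkp, hka, hkr⟩ := hk0
    have hmod := key k hkp hka
    have hlt : (ρ k - (a + 1)) % p < p := Nat.mod_lt _ hp
    have hne : a + 1 + ((ρ k - (a + 1)) % p) ≠ a + p := by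
      intro h'
      apply hkr
      rw [← hmod, h', Nat.add_mod_right]
    have hxle : a + 1 + ((ρ k - (a + 1)) % p) ≤ ρ k := by
      by_contra h'
      push_neg at h'
      have hd := (Nat.modEq_iff_dvd' (le_of_lt h')).mp hmod.symm
      have := Nat.eq_zero_of_dvd_of_lt hd (by omega)
      omega
    exact Finset.mem_filter.mpr ⟨hfull' hkp hmod hxle, by omega, by omega⟩
  · intro k1 h1 k2 h2 heq
    simp only [Finset.mem_filter, Finset.mem_range] at h1 h2
    apply hresinj _ _ h1.1 h2.1
    rw [← key k1 h1.1 h1.2.1, ← key k2 h2.1 h2.2.1, heq]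
  · intro x hx
    simp only [Finset.mem_filter] at hx
    obtain ⟨hxB, hax, hxap⟩ := hx
    obtain ⟨k, hkp, hkr⟩ := hsur (x % p) (Nat.mod_lt _ hp)
    have hxk : x ≤ ρ k := (hmax k hkp).2 x hxB hkr.symm
    have hres : ρ k % p ≠ a % p := by
      intro hcon
      have h1 : a % p = x % p := by rw [← hkr, hcon]
      have hd := (Nat.modEq_iff_dvd' (le_of_lt hax)).mp h1
      have := Nat.eq_zero_of_dvd_of_lt hd (by omega)
      omega
    refine ⟨k, Finset.mem_filter.mpr ⟨Finset.mem_range.mpr hkp, by omega, hres⟩, ?_⟩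
    have hmod := key k hkp (by omega)
    have h2 : (a + 1 + ((ρ k - (a + 1)) % p)) % p = x % p := by rw [hmod, hkr]
    have hlt : (ρ k - (a + 1)) % p < p := Nat.mod_lt _ hp
    rcases le_total (a + 1 + ((ρ k - (a + 1)) % p)) x with h' | h'
    · have hd := (Nat.modEq_iff_dvd' h').mp h2
      have := Nat.eq_zero_of_dvd_of_lt hd (by omega)
      omega
    · have hd := (Nat.modEq_iff_dvd' h').mp h2.symm
      have := Nat.eq_zero_of_dvd_of_lt hd (by omega)
      omega

end Count


/-- `∂⌈i,j⌋ = j − i − 1 + γ_{ij}`: every two-step `p`-rim-hook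
removal sequence from `⌈i,j⌋` down to `γ` has leg lengths `l₁, l₂` with
`|l₁ − l₂| = j − i − 1 + γ_{ij}`. -/
theorem stmt12 (p : ℕ) (hp : p.Prime) (hodd : Odd p)
    (γ : PartitionNat) (hγ : IsCore p γ) (hsc : SelfConj γ)
    (N : ℕ) (hN : p ∣ N) (hNlen : γ.len + 2 * p ≤ N)
    (ρ : ℕ → ℕ) (hρ : IsRho p N γ ρ)
    (i j : ℕ) (hij : i ≤ j) (hj : j ≤ p - 1) (hi : i < p - 1)
    (lam : PartitionNat) (hlen : lam.len ≤ N)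
    (hβ : betaSet N lam = fayersBeta p (betaSet N γ) ρ i j) :
    ∀ μ l1 l2, RemoveHook p lam μ l1 → RemoveHook p μ γ l2 →
      ((max l1 l2 - min l1 l2 : ℤ) = (j : ℤ) - (i : ℤ) - 1 + (pyr p ρ i j : ℤ)) := by
  intro μ l1 l2 h1 h2
  obtain ⟨hmono, hmaxfull, hsur⟩ := hρ
  have hp0 : 0 < p := hp.pos
  have hp2 : 2 ≤ p := hp.two_le
  have hpne2 : p ≠ 2 := by
    rintro rfl
    exact absurd (Nat.odd_iff.mp hodd) (by norm_num)
  have hp3 : 3 ≤ p := by omega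
  have hγlen : γ.len ≤ N := by omega
  have hip : i < p := by omega
  have hjp : j < p := by omega
  have hi1p : i + 1 < p := by omega
  set B := betaSet N γ with hBdef
  have hmax : ∀ m, m < p → ρ m ∈ B ∧ ∀ x ∈ B, x % p = ρ m % p → x ≤ ρ m := hmaxfull
  have hfull : ∀ b ∈ B, p ≤ b → b - p ∈ B := by
    rw [hBdef]; exact core_full hp0 hγ hγlen
  have hlow : ∀ x, x < 2 * p → x ∈ B := by
    intro x hx
    rw [hBdef]
    refine mem_betaSet.mpr ⟨N - 1 - x, by omega, ?_⟩
    have hz : γ.part (N - 1 - x) = 0 := part_eq_zero_of_len_le (by omega)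
    omega
  have hrge : ∀ m, m < p → p ≤ ρ m := by
    intro m hm'
    have h1 : p + ρ m % p ∈ B := hlow _ (by
      have := Nat.mod_lt (ρ m) hp0; omega)
    have h2 := (hmax m hm').2 _ h1 (by
      rw [Nat.add_mod_left, Nat.mod_mod_of_dvd _ dvd_rfl])
    omega
  have hresinj : ∀ k m, k < p → m < p → ρ k % p = ρ m % p → k = m := by
    intro k m hk hm' he
    by_contra hne
    rcases lt_or_gt_of_ne hne with h' | h'
    · have h1 := hmono k m h' hm'
      have h2 := (hmax k hk).2 (ρ m) (hmax m hm').1 he.symm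
      omega
    · have h1 := hmono m k h' hk
      have h2 := (hmax m hm').2 (ρ k) (hmax k hk).1 he
      omega
  have hrle : ∀ k m, k ≤ m → m < p → ρ k ≤ ρ m := by
    intro k m hkm hm'
    rcases eq_or_lt_of_le hkm with rfl | h'
    · exact le_rfl
    · exact le_of_lt (hmono k m h' hm')
  have hradd : ∀ m, m < p → ρ m + p ∉ B := by
    intro m hm' hmem
    have := (hmax m hm').2 _ hmem (Nat.add_mod_right _ _)
    omega
  have hradd2 : ∀ m, m < p → ρ m + 2 * p ∉ B := by
    intro m hm' hmem
    have := (hmax m hm').2 _ hmem (by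
      have e : ρ m + 2 * p = ρ m + p + p := by omega
      rw [e, Nat.add_mod_right, Nat.add_mod_right])
    omega
  have hcnt := count_interval hp0 hfull hmax hsur hresinj
  have hcnt_rho : ∀ m, m < p →
      (B.filter fun x => ρ m < x ∧ x < ρ m + p).card = p - 1 - m := by
    intro m hm'
    rw [hcnt (ρ m)]
    have hIco : ((Finset.range p).filter fun k => ρ m < ρ k ∧ ρ k % p ≠ ρ m % p)
        = Finset.Ico (m + 1) p := by
      ext k
      simp only [Finset.mem_filter, Finset.mem_range, Finset.mem_Ico]
      constructor
      · rintro ⟨hk, h1, _⟩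
        refine ⟨?_, hk⟩
        by_contra h3
        have := hrle k m (by omega) hm'
        omega
      · rintro ⟨h1, hk⟩
        exact ⟨hk, hmono m k (by omega) hk,
          fun hres => by have := hresinj k m hk hm' hres; omega⟩
    rw [hIco, Nat.card_Ico]
    omega
  have cnt_above : ∀ u t, u < p → t ≤ p → (∀ k, k < p → (ρ u + p < ρ k ↔ t ≤ k)) →
      (B.filter fun x => ρ u + p < x ∧ x < ρ u + p + p).card = p - t := by
    intro u t hu ht hiff
    rw [hcnt (ρ u + p)]
    have hIco : ((Finset.range p).filter fun k => ρ u + p < ρ k ∧ ρ k % p ≠ (ρ u + p) % p)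
        = Finset.Ico t p := by
      ext k
      simp only [Finset.mem_filter, Finset.mem_range, Finset.mem_Ico, Nat.add_mod_right]
      constructor
      · rintro ⟨hk, h1, _⟩
        exact ⟨(hiff k hk).mp h1, hk⟩
      · rintro ⟨h1, hk⟩
        refine ⟨hk, (hiff k hk).mpr h1, fun hres => ?_⟩
        have hku := hresinj k u hk hu hres
        subst hku
        have h2 := (hiff k hk).mpr h1
        omega
    rw [hIco, Nat.card_Ico]
  have hpyr_one : ∀ a b, a ≤ b → b < p → (pyr p ρ a b = 1 ↔ ρ b < ρ a + p) := by
    intro a b hab hbp'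
    have hle := hrle a b hab hbp'
    unfold pyr
    rw [if_neg (show ¬ b < a by omega), if_neg (show ¬ p ≤ b by omega)]
    constructor
    · intro hEq
      by_contra hcon
      rw [if_neg (show ¬ ρ b - ρ a < p by omega)] at hEq
      exact absurd hEq (by norm_num)
    · intro hlt
      rw [if_pos (show ρ b - ρ a < p by omega)]
  have hpyr_zero_ge : ∀ a b, a ≤ b → p ≤ b → pyr p ρ a b = 0 := by
    intro a b hab hbp'
    unfold pyr
    rw [if_neg (show ¬ b < a by omega), if_pos (show p ≤ b by omega)]
  have hstrict : ∀ a b, a < b → b < p → pyr p ρ a b ≠ 1 → ρ a + p < ρ b := by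
    intro a b hab hbp' hne
    have h1 : ρ a + p ≤ ρ b := by
      by_contra h'
      exact hne ((hpyr_one a b (by omega) hbp').mpr (by omega))
    rcases eq_or_lt_of_le h1 with hEq | h'
    · exfalso
      have := hresinj b a hbp' (by omega) (by rw [← hEq, Nat.add_mod_right])
      omega
    · exact h'
  have classify_pair : ∀ u v b, u < p → v < p →
      b ∈ (B \ {ρ u, ρ v}) ∪ {ρ u + p, ρ v + p} → p ≤ b →
      b - p ∉ (B \ {ρ u, ρ v}) ∪ {ρ u + p, ρ v + p} →
      b = ρ u + p ∨ b = ρ v + p := by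
    intro u v b hu hv hmem hpb hgap
    rcases Finset.mem_union.mp hmem with hB' | hA
    · exfalso
      obtain ⟨hbB, hbne⟩ := Finset.mem_sdiff.mp hB'
      have hbpB := hfull b hbB hpb
      have hor : b - p = ρ u ∨ b - p = ρ v := by
        by_contra hcon
        push_neg at hcon
        apply hgap
        apply Finset.mem_union_left
        refine Finset.mem_sdiff.mpr ⟨hbpB, ?_⟩
        simp only [Finset.mem_insert, Finset.mem_singleton]
        exact not_or.mpr hcon
      rcases hor with h' | h'
      · have hb' : b = ρ u + p := by omega
        exact hradd u hu (hb' ▸ hbB)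
      · have hb' : b = ρ v + p := by omega
        exact hradd v hv (hb' ▸ hbB)
    · simpa using hA
  have classify_mu : ∀ w b, w < p → b ∈ (B \ {ρ w}) ∪ {ρ w + p} → p ≤ b →
      b - p ∉ (B \ {ρ w}) ∪ {ρ w + p} → b = ρ w + p := by
    intro w b hw hmem hpb hgap
    rcases Finset.mem_union.mp hmem with hB' | hA
    · exfalso
      obtain ⟨hbB, hbne⟩ := Finset.mem_sdiff.mp hB'
      have hbpB := hfull b hbB hpb
      have h' : b - p = ρ w := by
        by_contra hcon
        apply hgap
        apply Finset.mem_union_left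
        exact Finset.mem_sdiff.mpr ⟨hbpB, by simpa using hcon⟩
      have hb' : b = ρ w + p := by omega
      exact hradd w hw (hb' ▸ hbB)
    · simpa using hA
  have classify_one : ∀ w b, w < p → b ∈ (B \ {ρ w}) ∪ {ρ w + 2 * p} → p ≤ b →
      b - p ∉ (B \ {ρ w}) ∪ {ρ w + 2 * p} → b = ρ w + 2 * p := by
    intro w b hw hmem hpb hgap
    rcases Finset.mem_union.mp hmem with hB' | hA
    · exfalso
      obtain ⟨hbB, hbne⟩ := Finset.mem_sdiff.mp hB'
      have hbpB := hfull b hbB hpb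
      have h' : b - p = ρ w := by
        by_contra hcon
        apply hgap
        apply Finset.mem_union_left
        exact Finset.mem_sdiff.mpr ⟨hbpB, by simpa using hcon⟩
      have hb' : b = ρ w + p := by omega
      exact hradd w hw (hb' ▸ hbB)
    · simpa using hA
  have classify_sq : ∀ w b, w < p → b ∈ (B \ {ρ w - p}) ∪ {ρ w + p} → p ≤ b →
      b - p ∉ (B \ {ρ w - p}) ∪ {ρ w + p} → b = ρ w := by
    intro w b hw hmem hpb hgap
    have hwp : p ≤ ρ w := hrge w hw
    rcases Finset.mem_union.mp hmem with hB' | hA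
    · obtain ⟨hbB, hbne⟩ := Finset.mem_sdiff.mp hB'
      have hbpB := hfull b hbB hpb
      have h' : b - p = ρ w - p := by
        by_contra hcon
        apply hgap
        apply Finset.mem_union_left
        exact Finset.mem_sdiff.mpr ⟨hbpB, by simpa using hcon⟩
      simp only [Finset.mem_singleton] at hbne
      omega
    · exfalso
      have hb : b = ρ w + p := by simpa using hA
      apply hgap
      rw [hb, Nat.add_sub_cancel]
      apply Finset.mem_union_left
      refine Finset.mem_sdiff.mpr ⟨(hmax w hw).1, ?_⟩
      simp only [Finset.mem_singleton]
      omega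
  have hswap : ∀ x y : ℕ, x ∈ B → x ≠ y → x + p ∉ B → x + p ≠ y + p →
      insert x (((B \ {x, y}) ∪ {x + p, y + p}) \ {x + p}) = (B \ {y}) ∪ {y + p} := by
    intro x y hxB hxy hxpB hxpyp
    ext z
    simp only [Finset.mem_insert, Finset.mem_sdiff, Finset.mem_union, Finset.mem_singleton,
      not_or]
    constructor
    · rintro (rfl | ⟨(⟨hzB, hz1, hz2⟩ | (h3 | h3)), h4⟩)
      · exact Or.inl ⟨hxB, hxy⟩
      · exact Or.inl ⟨hzB, hz2⟩
      · exact absurd h3 h4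
      · exact Or.inr h3
    · rintro (⟨hzB, hzy⟩ | rfl)
      · by_cases hzx : z = x
        · exact Or.inl hzx
        · exact Or.inr ⟨Or.inl ⟨hzB, hzx, hzy⟩, fun h => hxpB (h ▸ hzB)⟩
      · exact Or.inr ⟨Or.inr (Or.inr rfl), fun h => hxpyp h.symm⟩
  have leg2_mu : ∀ w, w < p →
      (((B \ {ρ w}) ∪ {ρ w + p}).filter fun x => ρ w < x ∧ x < ρ w + p).card = p - 1 - w := by
    intro w hw
    have hset : ((B \ {ρ w}) ∪ {ρ w + p}).filter (fun x => ρ w < x ∧ x < ρ w + p)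
        = B.filter (fun x => ρ w < x ∧ x < ρ w + p) := by
      ext x
      simp only [Finset.mem_filter, Finset.mem_union, Finset.mem_sdiff, Finset.mem_singleton]
      constructor
      · rintro ⟨(⟨hxB, _⟩ | h3), hP⟩
        · exact ⟨hxB, hP⟩
        · omega
      · rintro ⟨hxB, hP⟩
        exact ⟨Or.inl ⟨hxB, by omega⟩, hP⟩
    rw [hset, hcnt_rho w hw]
  obtain ⟨hlamN, hμlen, b1, hb1m, hb1p, hb1g, hμeq, hl1⟩ := removeHook_norm hp2 h1 hlen
  obtain ⟨_, _, b2, hb2m, hb2p, hb2g, hγeq, hl2⟩ := removeHook_norm hp2 h2 hμlen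
  have pair_close : ∀ u v, u < p → v < p → u < v → ρ v < ρ u + p →
      betaSet N lam = (B \ {ρ u, ρ v}) ∪ {ρ u + p, ρ v + p} →
      (l1 = p - 1 - u - 1 ∧ l2 = p - 1 - v) ∨ (l1 = p - 1 - v + 1 ∧ l2 = p - 1 - u) := by
    intro u v hu hv huv hclose hβ'
    have hruv : ρ u < ρ v := hmono u v huv hv
    have huB := (hmax u hu).1
    have hvB := (hmax v hv).1
    have hupB := hradd u hu
    have hvpB := hradd v hv
    rcases classify_pair u v b1 hu hv (hβ' ▸ hb1m) hb1p (hβ' ▸ hb1g) with hb1v | hb1v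
    · subst hb1v
      rw [hβ'] at hl1 hμeq
      rw [Nat.add_sub_cancel] at hl1 hμeq
      left
      have hset1 : ((B \ {ρ u, ρ v}) ∪ {ρ u + p, ρ v + p}).filter
            (fun x => ρ u < x ∧ x < ρ u + p)
          = (B.filter fun x => ρ u < x ∧ x < ρ u + p).erase (ρ v) := by
        ext x
        simp only [Finset.mem_filter, Finset.mem_union, Finset.mem_sdiff, Finset.mem_singleton,
          Finset.mem_insert, Finset.mem_erase, not_or]
        constructor
        · rintro ⟨(⟨hxB, hx1, hx2⟩ | (h3 | h3)), hP⟩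
          · exact ⟨hx2, hxB, hP⟩
          · omega
          · omega
        · rintro ⟨hne, hxB, hP⟩
          exact ⟨Or.inl ⟨hxB, by omega, hne⟩, hP⟩
      rw [hset1, Finset.card_erase_of_mem
        (Finset.mem_filter.mpr ⟨hvB, by omega, by omega⟩), hcnt_rho u hu] at hl1
      rw [hswap (ρ u) (ρ v) huB (by omega) hupB (by omega)] at hμeq
      have hb2v : b2 = ρ v + p := classify_mu v b2 hv (hμeq ▸ hb2m) hb2p (hμeq ▸ hb2g)
      subst hb2v
      rw [hμeq, Nat.add_sub_cancel, leg2_mu v hv] at hl2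
      exact ⟨hl1, hl2⟩
    · subst hb1v
      rw [hβ'] at hl1 hμeq
      rw [Nat.add_sub_cancel] at hl1 hμeq
      right
      have hset2 : ((B \ {ρ u, ρ v}) ∪ {ρ u + p, ρ v + p}).filter
            (fun x => ρ v < x ∧ x < ρ v + p)
          = insert (ρ u + p) (B.filter fun x => ρ v < x ∧ x < ρ v + p) := by
        ext x
        simp only [Finset.mem_filter, Finset.mem_union, Finset.mem_sdiff, Finset.mem_singleton,
          Finset.mem_insert, not_or]
        constructor
        · rintro ⟨(⟨hxB, hx1, hx2⟩ | (h3 | h3)), hP⟩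
          · exact Or.inr ⟨hxB, hP⟩
          · exact Or.inl h3
          · omega
        · rintro (rfl | ⟨hxB, hP⟩)
          · exact ⟨Or.inr (Or.inl rfl), by omega, by omega⟩
          · exact ⟨Or.inl ⟨hxB, by omega, by omega⟩, hP⟩
      rw [hset2, Finset.card_insert_of_notMem
        (fun hmem => hupB (Finset.mem_filter.mp hmem).1), hcnt_rho v hv] at hl1
      rw [Finset.pair_comm (ρ u) (ρ v), Finset.pair_comm (ρ u + p) (ρ v + p)] at hμeq
      rw [hswap (ρ v) (ρ u) hvB (by omega) hvpB (by omega)] at hμeq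
      have hb2v : b2 = ρ u + p := classify_mu u b2 hu (hμeq ▸ hb2m) hb2p (hμeq ▸ hb2g)
      subst hb2v
      rw [hμeq, Nat.add_sub_cancel, leg2_mu u hu] at hl2
      exact ⟨hl1, hl2⟩
  have pair_far : ∀ u v, u < p → v < p → u < v → ρ u + p < ρ v →
      betaSet N lam = (B \ {ρ u, ρ v}) ∪ {ρ u + p, ρ v + p} →
      (l1 = p - 1 - u ∧ l2 = p - 1 - v) ∨ (l1 = p - 1 - v ∧ l2 = p - 1 - u) := by
    intro u v hu hv huv hfar hβ'
    have hruv : ρ u < ρ v := hmono u v huv hv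
    have huB := (hmax u hu).1
    have hvB := (hmax v hv).1
    have hupB := hradd u hu
    have hvpB := hradd v hv
    rcases classify_pair u v b1 hu hv (hβ' ▸ hb1m) hb1p (hβ' ▸ hb1g) with hb1v | hb1v
    · subst hb1v
      rw [hβ'] at hl1 hμeq
      rw [Nat.add_sub_cancel] at hl1 hμeq
      left
      have hset1 : ((B \ {ρ u, ρ v}) ∪ {ρ u + p, ρ v + p}).filter
            (fun x => ρ u < x ∧ x < ρ u + p)
          = B.filter fun x => ρ u < x ∧ x < ρ u + p := by
        ext x
        simp only [Finset.mem_filter, Finset.mem_union, Finset.mem_sdiff, Finset.mem_singleton,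
          Finset.mem_insert, not_or]
        constructor
        · rintro ⟨(⟨hxB, hx1, hx2⟩ | (h3 | h3)), hP⟩
          · exact ⟨hxB, hP⟩
          · omega
          · omega
        · rintro ⟨hxB, hP⟩
          exact ⟨Or.inl ⟨hxB, by omega, by omega⟩, hP⟩
      rw [hset1, hcnt_rho u hu] at hl1
      rw [hswap (ρ u) (ρ v) huB (by omega) hupB (by omega)] at hμeq
      have hb2v : b2 = ρ v + p := classify_mu v b2 hv (hμeq ▸ hb2m) hb2p (hμeq ▸ hb2g)
      subst hb2v
      rw [hμeq, Nat.add_sub_cancel, leg2_mu v hv] at hl2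
      exact ⟨hl1, hl2⟩
    · subst hb1v
      rw [hβ'] at hl1 hμeq
      rw [Nat.add_sub_cancel] at hl1 hμeq
      right
      have hset2 : ((B \ {ρ u, ρ v}) ∪ {ρ u + p, ρ v + p}).filter
            (fun x => ρ v < x ∧ x < ρ v + p)
          = B.filter fun x => ρ v < x ∧ x < ρ v + p := by
        ext x
        simp only [Finset.mem_filter, Finset.mem_union, Finset.mem_sdiff, Finset.mem_singleton,
          Finset.mem_insert, not_or]
        constructor
        · rintro ⟨(⟨hxB, hx1, hx2⟩ | (h3 | h3)), hP⟩
          · exact ⟨hxB, hP⟩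
          · omega
          · omega
        · rintro ⟨hxB, hP⟩
          exact ⟨Or.inl ⟨hxB, by omega, by omega⟩, hP⟩
      rw [hset2, hcnt_rho v hv] at hl1
      rw [Finset.pair_comm (ρ u) (ρ v), Finset.pair_comm (ρ u + p) (ρ v + p)] at hμeq
      rw [hswap (ρ v) (ρ u) hvB (by omega) hvpB (by omega)] at hμeq
      have hb2v : b2 = ρ u + p := classify_mu u b2 hu (hμeq ▸ hb2m) hb2p (hμeq ▸ hb2g)
      subst hb2v
      rw [hμeq, Nat.add_sub_cancel, leg2_mu u hu] at hl2
      exact ⟨hl1, hl2⟩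
  have one_case : ∀ u t, u < p → t ≤ p →
      (∀ k, k < p → (ρ u + p < ρ k ↔ t ≤ k)) →
      betaSet N lam = (B \ {ρ u}) ∪ {ρ u + 2 * p} →
      l1 = p - t ∧ l2 = p - 1 - u := by
    intro u t hu ht hiff hβ'
    have huB := (hmax u hu).1
    have hup := hrge u hu
    have hupB := hradd u hu
    have hup2B := hradd2 u hu
    have hb1v : b1 = ρ u + 2 * p := classify_one u b1 hu (hβ' ▸ hb1m) hb1p (hβ' ▸ hb1g)
    subst hb1v
    rw [hβ'] at hl1 hμeq
    have e1 : ρ u + 2 * p - p = ρ u + p := by omega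
    rw [e1] at hl1 hμeq
    have hl1' : l1 = (((B \ {ρ u}) ∪ {ρ u + 2 * p}).filter
        fun x => ρ u + p < x ∧ x < ρ u + p + p).card := by
      rw [hl1]
      congr 1
      apply Finset.filter_congr
      intro x _
      constructor <;> intro <;> omega
    have hset : ((B \ {ρ u}) ∪ {ρ u + 2 * p}).filter (fun x => ρ u + p < x ∧ x < ρ u + p + p)
        = B.filter fun x => ρ u + p < x ∧ x < ρ u + p + p := by
      ext x
      simp only [Finset.mem_filter, Finset.mem_union, Finset.mem_sdiff, Finset.mem_singleton]
      constructor
      · rintro ⟨(⟨hxB, hx1⟩ | h3), hP⟩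
        · exact ⟨hxB, hP⟩
        · omega
      · rintro ⟨hxB, hP⟩
        exact ⟨Or.inl ⟨hxB, by omega⟩, hP⟩
    have hl1v : l1 = p - t := by rw [hl1', hset, cnt_above u t hu ht hiff]
    have hμone : insert (ρ u + p) (((B \ {ρ u}) ∪ {ρ u + 2 * p}) \ {ρ u + 2 * p})
        = (B \ {ρ u}) ∪ {ρ u + p} := by
      ext z
      simp only [Finset.mem_insert, Finset.mem_sdiff, Finset.mem_union, Finset.mem_singleton]
      constructor
      · rintro (rfl | ⟨(⟨hzB, hz1⟩ | h3), h4⟩)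
        · exact Or.inr rfl
        · exact Or.inl ⟨hzB, hz1⟩
        · exact absurd h3 h4
      · rintro (⟨hzB, hz1⟩ | rfl)
        · exact Or.inr ⟨Or.inl ⟨hzB, hz1⟩, fun h => hup2B (h ▸ hzB)⟩
        · exact Or.inl rfl
    rw [hμone] at hμeq
    have hb2v : b2 = ρ u + p := classify_mu u b2 hu (hμeq ▸ hb2m) hb2p (hμeq ▸ hb2g)
    subst hb2v
    rw [hμeq, Nat.add_sub_cancel, leg2_mu u hu] at hl2
    exact ⟨hl1v, hl2⟩
  unfold fayersBeta pairBeta oneBeta sqBeta at hβ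
  by_cases hc1 : i = j
  · subst hc1
    rw [if_pos rfl] at hβ
    have hpv : pyr p ρ i i = 1 := (hpyr_one i i le_rfl hip).mpr (by omega)
    by_cases hc2 : pyr p ρ (i + 1) (i + 2) = 1
    · rw [if_pos hc2] at hβ
      have h2p : i + 2 < p := by
        by_contra h'
        rw [hpyr_zero_ge (i + 1) (i + 2) (by omega) (by omega)] at hc2
        exact absurd hc2 (by norm_num)
      have hcl : ρ (i + 2) < ρ (i + 1) + p := (hpyr_one (i + 1) (i + 2) (by omega) h2p).mp hc2
      rcases pair_close (i + 1) (i + 2) (by omega) h2p (by omega) hcl hβ with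
        ⟨e1, e2⟩ | ⟨e1, e2⟩ <;>
      · rw [hpv]
        push_cast
        omega
    · rw [if_neg hc2] at hβ
      have hcut : ∀ k, k < p → (ρ (i + 1) + p < ρ k ↔ i + 2 ≤ k) := by
        intro k hk
        constructor
        · intro h'
          by_contra h''
          have := hrle k (i + 1) (by omega) hi1p
          omega
        · intro h'
          have h2p : i + 2 < p := by omega
          have hst : ρ (i + 1) + p < ρ (i + 2) := hstrict (i + 1) (i + 2) (by omega) h2p hc2
          have := hrle (i + 2) k h' hk
          omega
      obtain ⟨e1, e2⟩ := one_case (i + 1) (i + 2) hi1p (by omega) hcut hβ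
      rw [hpv]
      push_cast
      omega
  · rw [if_neg hc1] at hβ
    have hijlt : i < j := by omega
    by_cases hc3 : pyr p ρ i (j + 1) = 1
    · rw [if_pos hc3] at hβ
      have hj1p : j + 1 < p := by
        by_contra h'
        rw [hpyr_zero_ge i (j + 1) (by omega) (by omega)] at hc3
        exact absurd hc3 (by norm_num)
      have hcl : ρ (j + 1) < ρ i + p := (hpyr_one i (j + 1) (by omega) hj1p).mp hc3
      have hmj := hmono j (j + 1) (by omega) hj1p
      have hpv : pyr p ρ i j = 1 := (hpyr_one i j hij hjp).mpr (by omega)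
      rcases pair_close i (j + 1) hip hj1p (by omega) hcl hβ with ⟨e1, e2⟩ | ⟨e1, e2⟩ <;>
      · rw [hpv]
        push_cast
        omega
    · rw [if_neg hc3] at hβ
      by_cases hc4 : pyr p ρ i j = 1
      · rw [if_pos hc4] at hβ
        have hclij : ρ j < ρ i + p := (hpyr_one i j hij hjp).mp hc4
        have hcut : ∀ k, k < p → (ρ i + p < ρ k ↔ j + 1 ≤ k) := by
          intro k hk
          constructor
          · intro h'
            by_contra h''
            have := hrle k j (by omega) hjp
            omega
          · intro h'
            have hj1p : j + 1 < p := by omega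
            have hst : ρ i + p < ρ (j + 1) := hstrict i (j + 1) (by omega) hj1p hc3
            have := hrle (j + 1) k h' hk
            omega
        obtain ⟨e1, e2⟩ := one_case i (j + 1) hip (by omega) hcut hβ
        rw [hc4]
        push_cast
        omega
      · rw [if_neg hc4] at hβ
        by_cases hc5 : pyr p ρ (i + 1) j = 1
        · rw [if_pos hc5] at hβ
          have hDfar : ρ i + p < ρ j := hstrict i j hijlt hjp hc4
          have hi1j : i + 1 ≤ j := by omega
          have hDnear : ρ j < ρ (i + 1) + p := (hpyr_one (i + 1) j hi1j hjp).mp hc5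
          have hjge := hrge j hjp
          have hjB := (hmax j hjp).1
          have hjsubB : ρ j - p ∈ B := hfull _ hjB hjge
          have hjpB := hradd j hjp
          have hb1v : b1 = ρ j := classify_sq j b1 hjp (hβ ▸ hb1m) hb1p (hβ ▸ hb1g)
          subst hb1v
          rw [hβ] at hl1 hμeq
          have hset : (((B \ {ρ j - p}) ∪ {ρ j + p}).filter fun x => ρ j - p < x ∧ x < ρ j)
              = B.filter fun x => ρ j - p < x ∧ x < ρ j := by
            ext x
            simp only [Finset.mem_filter, Finset.mem_union, Finset.mem_sdiff,
              Finset.mem_singleton]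
            constructor
            · rintro ⟨(⟨hxB, hx1⟩ | h3), hP⟩
              · exact ⟨hxB, hP⟩
              · omega
            · rintro ⟨hxB, hP⟩
              exact ⟨Or.inl ⟨hxB, by omega⟩, hP⟩
          have hcntD : (B.filter fun x => ρ j - p < x ∧ x < ρ j).card = p - (i + 1) - 1 := by
            have e : ρ j - p + p = ρ j := by omega
            have hpred : (B.filter fun x => ρ j - p < x ∧ x < ρ j)
                = B.filter fun x => ρ j - p < x ∧ x < ρ j - p + p := by
              apply Finset.filter_congr
              intro x _
              constructor <;> intro <;> omega
            rw [hpred, hcnt (ρ j - p)]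
            have hres : (ρ j - p) % p = ρ j % p := by
              conv_rhs => rw [← e]
              rw [Nat.add_mod_right]
            have hIco : ((Finset.range p).filter
                  fun k => ρ j - p < ρ k ∧ ρ k % p ≠ (ρ j - p) % p)
                = (Finset.Ico (i + 1) p).erase j := by
              ext k
              simp only [Finset.mem_filter, Finset.mem_range, Finset.mem_Ico, Finset.mem_erase,
                hres]
              constructor
              · rintro ⟨hk, h1, h2⟩
                refine ⟨fun hkj => h2 (by rw [hkj]), ?_, hk⟩
                by_contra h3
                have := hrle k i (by omega) hip
                omega
              · rintro ⟨hkj, h1, hk⟩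
                refine ⟨hk, ?_, fun hres2 => hkj (hresinj k j hk hjp hres2)⟩
                rcases lt_or_gt_of_ne hkj with h' | h'
                · have := hrle (i + 1) k h1 hk
                  omega
                · have := hmono j k h' hk
                  omega
            rw [hIco, Finset.card_erase_of_mem
              (by simp only [Finset.mem_Ico]; omega), Nat.card_Ico]
          rw [hset, hcntD] at hl1
          have hμsq : insert (ρ j - p) (((B \ {ρ j - p}) ∪ {ρ j + p}) \ {ρ j})
              = (B \ {ρ j}) ∪ {ρ j + p} := by
            ext z
            simp only [Finset.mem_insert, Finset.mem_sdiff, Finset.mem_union,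
              Finset.mem_singleton]
            constructor
            · rintro (rfl | ⟨(⟨hzB, hz1⟩ | h3), h4⟩)
              · exact Or.inl ⟨hjsubB, by omega⟩
              · exact Or.inl ⟨hzB, h4⟩
              · exact Or.inr h3
            · rintro (⟨hzB, hz1⟩ | rfl)
              · by_cases hz2 : z = ρ j - p
                · exact Or.inl hz2
                · exact Or.inr ⟨Or.inl ⟨hzB, hz2⟩, hz1⟩
              · exact Or.inr ⟨Or.inr rfl, by omega⟩
          rw [hμsq] at hμeq
          have hb2v : b2 = ρ j + p := classify_mu j b2 hjp (hμeq ▸ hb2m) hb2p (hμeq ▸ hb2g)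
          subst hb2v
          rw [hμeq, Nat.add_sub_cancel, leg2_mu j hjp] at hl2
          have hpv : pyr p ρ i j = 0 := by
            unfold pyr
            rw [if_neg (show ¬ j < i by omega), if_neg (show ¬ p ≤ j by omega),
              if_neg (show ¬ ρ j - ρ i < p by omega)]
          rw [hpv]
          push_cast
          omega
        · rw [if_neg hc5] at hβ
          have hi1j : i + 1 < j := by
            rcases eq_or_lt_of_le (show i + 1 ≤ j by omega) with h' | h'
            · exfalso
              apply hc5
              rw [h']
              exact (hpyr_one j j le_rfl hjp).mpr (by omega)
            · exact h'
          have hfar : ρ (i + 1) + p < ρ j := hstrict (i + 1) j hi1j hjp hc5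
          have hmi := hmono i (i + 1) (by omega) hi1p
          have hpv : pyr p ρ i j = 0 := by
            unfold pyr
            rw [if_neg (show ¬ j < i by omega), if_neg (show ¬ p ≤ j by omega),
              if_neg (show ¬ ρ j - ρ i < p by omega)]
          rcases pair_far (i + 1) j hi1p hjp hi1j hfar hβ with ⟨e1, e2⟩ | ⟨e1, e2⟩ <;>
          · rw [hpv]
            push_cast
            omega



end ArxivW2
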